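/- Let k, a be positive integers and n a natural number. The number of ordered pairs (L, p), where L is a (k,a)-path of order n and p is a hump of L, equals the number of super (k,a)-paths of order n whose first non-horizontal step is an up step; equivalently, the total number of humps over all paths in P_n(k,a) equals |SP^U_n(k,a)|. -/

import Mathlib

/-- Steps for `(k,a)`-paths: up `U = (1,k)`, down `D = (1,-1)`, horizontal `H = (a,0)`. -/
inductive Step : Type
  | U : Step
  | D : Step
  | H : Step
  deriving DecidableEq

/-- The displacement of a single step. -/
def stepDisp (k a : ℕ) : Step → ℤ × ℤ
  | Step.U => (1, (k : ℤ))
  | Step.D => (1, -1)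
  | Step.H => ((a : ℤ), 0)

/-- The total displacement of a word of steps. -/
def pathDisp (k a : ℕ) (w : List Step) : ℤ × ℤ := (w.map (stepDisp k a)).sum

/-- A super `(k,a)`-path of order `n`: a step word with total displacement `(n,0)`. -/
def IsSuperPath (k a n : ℕ) (w : List Step) : Prop :=
  pathDisp k a w = ((n : ℤ), 0)

/-- A `(k,a)`-path of order `n`: a super path all of whose partial sums have
nonnegative `y`-coordinate. -/
def IsPath (k a n : ℕ) (w : List Step) : Prop :=
  IsSuperPath k a n w ∧ ∀ p : List Step, p <+: w → 0 ≤ (pathDisp k a p).2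

/-- The first letter different from `H` exists and is `U`. -/
def FirstNonHIsU (w : List Step) : Prop :=
  ∃ (l : ℕ) (r : List Step), w = List.replicate l Step.H ++ Step.U :: r

/-- There is a hump (a factor `U H^j D` for some `j ≥ 0`) starting at position `i` of `w`. -/
def IsHumpAt (w : List Step) (i : ℕ) : Prop :=
  ∃ j : ℕ, (Step.U :: (List.replicate j Step.H ++ [Step.D])) <+: w.drop i

namespace Stmt1Aux

/-- The `y`-value of a single step. -/
def yv (k : ℕ) : Step → ℤ
  | Step.U => (k : ℤ)
  | Step.D => -1
  | Step.H => 0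

/-- The `x`-value of a single step. -/
def xv (a : ℕ) : Step → ℤ
  | Step.U => 1
  | Step.D => 1
  | Step.H => (a : ℤ)

def sy (k : ℕ) (w : List Step) : ℤ := (w.map (yv k)).sum
def sx (a : ℕ) (w : List Step) : ℤ := (w.map (xv a)).sum

@[simp] lemma sy_nil (k : ℕ) : sy k [] = 0 := rfl
@[simp] lemma sx_nil (a : ℕ) : sx a [] = 0 := rfl
@[simp] lemma sy_cons (k : ℕ) (c : Step) (w : List Step) :
    sy k (c :: w) = yv k c + sy k w := by simp [sy]
@[simp] lemma sx_cons (a : ℕ) (c : Step) (w : List Step) :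
    sx a (c :: w) = xv a c + sx a w := by simp [sx]
@[simp] lemma sy_append (k : ℕ) (u v : List Step) :
    sy k (u ++ v) = sy k u + sy k v := by simp [sy]
@[simp] lemma sx_append (a : ℕ) (u v : List Step) :
    sx a (u ++ v) = sx a u + sx a v := by simp [sx]
@[simp] lemma sy_replicate_H (k l : ℕ) : sy k (List.replicate l Step.H) = 0 := by
  simp [sy, yv]
@[simp] lemma sx_replicate_H (a l : ℕ) : sx a (List.replicate l Step.H) = (l : ℤ) * a := by
  simp [sx, xv]

lemma pathDisp_eq (k a : ℕ) (w : List Step) : pathDisp k a w = (sx a w, sy k w) := by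
  induction w with
  | nil => rfl
  | cons c w ih =>
    have : pathDisp k a (c :: w) = stepDisp k a c + pathDisp k a w := by
      simp [pathDisp]
    rw [this, ih]
    cases c <;> simp [stepDisp, xv, yv, Prod.ext_iff] <;> ring

lemma superPath_iff (k a n : ℕ) (w : List Step) :
    IsSuperPath k a n w ↔ sx a w = (n : ℤ) ∧ sy k w = 0 := by
  rw [IsSuperPath, pathDisp_eq, Prod.ext_iff]

lemma isPath_take (k a n : ℕ) (w : List Step) (h : IsPath k a n w) (t : ℕ) :
    0 ≤ sy k (w.take t) := by
  have := h.2 (w.take t) (List.take_prefix t w)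
  rwa [pathDisp_eq] at this

/-- Partial sums are nonnegative. -/
def PrefNN (k : ℕ) (A : List Step) : Prop := ∀ t, 0 ≤ sy k (A.take t)

/-- The final sum is the minimum of all partial sums. -/
def MinAtEnd (k : ℕ) (C : List Step) : Prop := ∀ t, sy k C ≤ sy k (C.take t)

/-- All nonempty partial sums are strictly positive. -/
def StrictPos (k : ℕ) (C : List Step) : Prop :=
  ∀ t, 0 < t → t ≤ C.length → 0 < sy k (C.take t)

lemma StrictPos.take_nonneg {k : ℕ} {C : List Step} (h : StrictPos k C) (t : ℕ) :
    0 ≤ sy k (C.take t) := by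
  rcases Nat.eq_zero_or_pos t with rfl | ht
  · simp
  rcases le_or_gt t C.length with hle | hlt
  · exact (h t ht hle).le
  · rw [List.take_of_length_le hlt.le]
    rcases Nat.eq_zero_or_pos C.length with h0 | hpos
    · rw [List.length_eq_zero_iff] at h0; simp [h0]
    · have := h C.length hpos le_rfl
      rw [List.take_length] at this
      exact this.le

lemma StrictPos.sy_nonneg {k : ℕ} {C : List Step} (h : StrictPos k C) : 0 ≤ sy k C := by
  have := h.take_nonneg C.length
  rwa [List.take_length] at this

/-- Seeds of the bijection. -/
def Seeds (k a n : ℕ) : Set (ℕ × List Step × List Step × List Step) :=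
  {σ | PrefNN k σ.2.1 ∧ sy k σ.2.1 = 0 ∧ MinAtEnd k σ.2.2.1 ∧ StrictPos k σ.2.2.2 ∧
    sx a σ.2.1 + sx a σ.2.2.1 + sx a σ.2.2.2 + 2 + (σ.1 : ℤ) * a = (n : ℤ) ∧
    (k : ℤ) - 1 + sy k σ.2.2.1 + sy k σ.2.2.2 = 0}

def toPair (σ : ℕ × List Step × List Step × List Step) : List Step × ℕ :=
  (σ.2.1 ++ σ.2.2.2 ++ Step.U :: (List.replicate σ.1 Step.H ++ Step.D :: σ.2.2.1),
   σ.2.1.length + σ.2.2.2.length)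

def toWord (σ : ℕ × List Step × List Step × List Step) : List Step :=
  List.replicate σ.1 Step.H ++ Step.U :: (σ.2.1 ++ Step.D :: (σ.2.2.1 ++ σ.2.2.2))


/-! ### Uniqueness lemmas -/

lemma rep_block_inj {c : Step} (hc : c ≠ Step.H) :
    ∀ (j : ℕ) {j' : ℕ} {s s' : List Step},
      List.replicate j Step.H ++ c :: s = List.replicate j' Step.H ++ c :: s' →
      j = j' ∧ s = s' := by
  intro j
  induction j with
  | zero =>
    intro j' s s' h
    cases j' with
    | zero => simpa using h
    | succ m =>
      rw [List.replicate_succ] at h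
      simp only [List.replicate_zero, List.nil_append, List.cons_append,
        List.cons.injEq] at h
      exact absurd h.1 hc
  | succ m ih =>
    intro j' s s' h
    cases j' with
    | zero =>
      rw [List.replicate_succ] at h
      simp only [List.replicate_zero, List.nil_append, List.cons_append,
        List.cons.injEq] at h
      exact absurd h.1.symm hc
    | succ m' =>
      rw [List.replicate_succ, List.replicate_succ] at h
      simp only [List.cons_append, List.cons.injEq, true_and] at h
      obtain ⟨h1, h2⟩ := ih h
      exact ⟨by omega, h2⟩

lemma U1_len {k : ℕ} {A A' C C' : List Step}
    (h : A ++ Step.D :: C = A' ++ Step.D :: C')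
    (hA : PrefNN k A) (h0' : sy k A' = 0) :
    A.length ≤ A'.length := by
  by_contra hlt
  push_neg at hlt
  have e2 : (A' ++ Step.D :: C').take (A'.length + 1) = A' ++ [Step.D] := by
    rw [List.take_add, List.take_append_of_le_length le_rfl, List.take_length,
      List.drop_left]
    rfl
  have h1 : A.take (A'.length + 1) = A' ++ [Step.D] := by
    have e1 : (A ++ Step.D :: C).take (A'.length + 1) = A.take (A'.length + 1) :=
      List.take_append_of_le_length (by omega)
    rw [← e1, h, e2]
  have := hA (A'.length + 1)
  rw [h1] at this
  simp [yv, h0'] at this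

lemma U1 {k : ℕ} {A A' C C' : List Step}
    (h : A ++ Step.D :: C = A' ++ Step.D :: C')
    (hA : PrefNN k A) (hA' : PrefNN k A') (h0 : sy k A = 0) (h0' : sy k A' = 0) :
    A = A' ∧ C = C' := by
  obtain ⟨e1, e2⟩ := List.append_inj h
    (le_antisymm (U1_len h hA h0') (U1_len h.symm hA' h0))
  exact ⟨e1, by simpa using e2⟩

lemma U2_len {k : ℕ} {C1 C2 C1' C2' : List Step} (h : C1 ++ C2 = C1' ++ C2')
    (hm : MinAtEnd k C1) (hs' : StrictPos k C2') : C1.length ≤ C1'.length := by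
  by_contra hlt
  push_neg at hlt
  have hlen : C1.length ≤ C1'.length + C2'.length := by
    have := congrArg List.length h
    simp only [List.length_append] at this
    omega
  have h1 : C1 = C1' ++ C2'.take (C1.length - C1'.length) := by
    have e1 := List.take_add (l := C1' ++ C2') (i := C1'.length) (j := C1.length - C1'.length)
    rw [List.take_append_of_le_length le_rfl, List.take_length, List.drop_left,
      show C1'.length + (C1.length - C1'.length) = C1.length by omega, ← h,
      List.take_append_of_le_length le_rfl, List.take_length] at e1
    exact e1
  have h2 : C1' = C1.take C1'.length := by
    rw [h1, List.take_append_of_le_length le_rfl, List.take_length]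
  have q1 : sy k C1 = sy k C1' + sy k (C2'.take (C1.length - C1'.length)) := by
    conv_lhs => rw [h1]
    exact sy_append _ _ _
  have q2 := hm C1'.length
  rw [← h2] at q2
  have q3 := hs' (C1.length - C1'.length) (by omega) (by omega)
  linarith

lemma U2 {k : ℕ} {C1 C2 C1' C2' : List Step} (h : C1 ++ C2 = C1' ++ C2')
    (hm : MinAtEnd k C1) (hm' : MinAtEnd k C1')
    (hs : StrictPos k C2) (hs' : StrictPos k C2') : C1 = C1' ∧ C2 = C2' :=
  List.append_inj h (le_antisymm (U2_len h hm hs') (U2_len h.symm hm' hs))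

lemma U3_len {k : ℕ} {A C2 A' C2' : List Step} (h : A ++ C2 = A' ++ C2')
    (h0 : sy k A = 0) (h0' : sy k A' = 0) (hs' : StrictPos k C2') :
    A.length ≤ A'.length := by
  by_contra hlt
  push_neg at hlt
  have hlen : A.length ≤ A'.length + C2'.length := by
    have := congrArg List.length h
    simp only [List.length_append] at this
    omega
  have h1 : A = A' ++ C2'.take (A.length - A'.length) := by
    have e1 := List.take_add (l := A' ++ C2') (i := A'.length) (j := A.length - A'.length)
    rw [List.take_append_of_le_length le_rfl, List.take_length, List.drop_left,
      show A'.length + (A.length - A'.length) = A.length by omega, ← h,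
      List.take_append_of_le_length le_rfl, List.take_length] at e1
    exact e1
  have q1 : sy k A = sy k A' + sy k (C2'.take (A.length - A'.length)) := by
    conv_lhs => rw [h1]
    exact sy_append _ _ _
  have q3 := hs' (A.length - A'.length) (by omega) (by omega)
  rw [h0, h0'] at q1
  linarith

lemma U3 {k : ℕ} {A C2 A' C2' : List Step} (h : A ++ C2 = A' ++ C2')
    (h0 : sy k A = 0) (h0' : sy k A' = 0)
    (hs : StrictPos k C2) (hs' : StrictPos k C2') : A = A' ∧ C2 = C2' :=
  List.append_inj h (le_antisymm (U3_len h h0 h0' hs') (U3_len h.symm h0' h0 hs))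

/-! ### Existence of the canonical splittings -/

lemma exists_firstNeg {k : ℕ} {r : List Step} (h : sy k r < 0) :
    ∃ A C, r = A ++ Step.D :: C ∧ PrefNN k A ∧ sy k A = 0 := by
  classical
  have hex : ∃ t, sy k (r.take t) < 0 := ⟨r.length, by rwa [List.take_length]⟩
  have ht1 : sy k (r.take (Nat.find hex)) < 0 := Nat.find_spec hex
  have ht1le : Nat.find hex ≤ r.length := Nat.find_min' hex (by rwa [List.take_length])
  have ht1ne : Nat.find hex ≠ 0 := by
    intro h0; rw [h0] at ht1; simp at ht1
  obtain ⟨t0, ht0⟩ : ∃ t0, Nat.find hex = t0 + 1 := ⟨Nat.find hex - 1, by omega⟩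
  have ht0lt : t0 < r.length := by omega
  have hdecomp : r = r.take t0 ++ r[t0] :: r.drop (t0 + 1) := by
    conv_lhs => rw [← List.take_append_drop t0 r]
    rw [List.drop_eq_getElem_cons ht0lt]
  have hnn : ∀ t, t ≤ t0 → 0 ≤ sy k (r.take t) := by
    intro t htle'
    by_contra hneg; push_neg at hneg
    exact Nat.find_min hex (by omega) hneg
  have hlenA : (r.take t0).length = t0 := by rw [List.length_take]; omega
  have htake1 : r.take (t0 + 1) = r.take t0 ++ [r[t0]] := by
    rw [List.take_add, List.drop_eq_getElem_cons ht0lt]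
    rfl
  have hveq : sy k (r.take (t0 + 1)) = sy k (r.take t0) + yv k r[t0] := by
    rw [htake1, sy_append, sy_cons, sy_nil]
    ring
  have hval : sy k (r.take t0) + yv k r[t0] < 0 := by
    rw [← hveq, ← ht0]
    exact ht1
  have h0le : 0 ≤ sy k (r.take t0) := hnn t0 le_rfl
  have heD : r[t0] = Step.D := by
    have hknn : (0 : ℤ) ≤ (k : ℤ) := Int.ofNat_nonneg k
    cases hc : r[t0] with
    | U => rw [hc] at hval; simp only [yv] at hval; exfalso; linarith
    | D => rfl
    | H => rw [hc] at hval; simp only [yv] at hval; exfalso; linarith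
  have hA0 : sy k (r.take t0) = 0 := by
    rw [heD] at hval
    simp only [yv] at hval
    omega
  refine ⟨r.take t0, r.drop (t0 + 1), ?_, ?_, hA0⟩
  · rw [← heD]; exact hdecomp
  · intro t
    rw [List.take_take]
    exact hnn _ (by omega)

lemma exists_lastMin (k : ℕ) (C : List Step) :
    ∃ C1 C2, C = C1 ++ C2 ∧ MinAtEnd k C1 ∧ StrictPos k C2 := by
  classical
  obtain ⟨x, hx, hmin⟩ := Finset.exists_min_image (Finset.range (C.length + 1))
      (fun t => sy k (C.take t)) ⟨0, by simp⟩
  rw [Finset.mem_range] at hx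
  have hPx : x ≤ C.length ∧ ∀ s, s ≤ C.length →
      sy k (C.take x) ≤ sy k (C.take s) :=
    ⟨by omega, fun s hs => hmin s (Finset.mem_range.mpr (by omega))⟩
  set P : ℕ → Prop := fun t => t ≤ C.length ∧ ∀ s, s ≤ C.length →
      sy k (C.take t) ≤ sy k (C.take s) with hPdef
  have hspec : P (Nat.findGreatest P C.length) :=
    Nat.findGreatest_spec (hPx.1) hPx
  set t2 := Nat.findGreatest P C.length with ht2
  have ht2le : t2 ≤ C.length := hspec.1
  refine ⟨C.take t2, C.drop t2, (List.take_append_drop _ _).symm, ?_, ?_⟩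
  · intro t
    rw [List.take_take]
    exact hspec.2 _ (by omega)
  · intro t htpos htle
    rw [List.length_drop] at htle
    have hsplit : C.take (t2 + t) = C.take t2 ++ (C.drop t2).take t :=
      List.take_add (l := C) (i := t2) (j := t)
    have hv : sy k (C.take (t2 + t)) = sy k (C.take t2) + sy k ((C.drop t2).take t) := by
      rw [hsplit]; simp
    by_contra hns; push_neg at hns
    have hge : sy k (C.take t2) ≤ sy k (C.take (t2 + t)) := hspec.2 _ (by omega)
    have heq : sy k (C.take (t2 + t)) = sy k (C.take t2) := by linarith
    have hP' : P (t2 + t) := ⟨by omega, fun s hs => by rw [heq]; exact hspec.2 s hs⟩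
    exact Nat.findGreatest_is_greatest (n := C.length) (by omega) (by omega) hP'

lemma exists_lastZero {k : ℕ} {Pw : List Step} (hP : PrefNN k Pw) :
    ∃ A C2, Pw = A ++ C2 ∧ PrefNN k A ∧ sy k A = 0 ∧ StrictPos k C2 := by
  classical
  set Q : ℕ → Prop := fun t => sy k (Pw.take t) = 0 with hQdef
  have h00 : Q 0 := by simp [hQdef]
  have hspec : Q (Nat.findGreatest Q Pw.length) :=
    Nat.findGreatest_spec (Nat.zero_le _) h00
  set t0 := Nat.findGreatest Q Pw.length with ht0
  have ht0le : t0 ≤ Pw.length := Nat.findGreatest_le _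
  have hz : sy k (Pw.take t0) = 0 := hspec
  refine ⟨Pw.take t0, Pw.drop t0, (List.take_append_drop _ _).symm, ?_, hz, ?_⟩
  · intro t
    rw [List.take_take]
    exact hP _
  · intro t htpos htle
    rw [List.length_drop] at htle
    have hsplit : Pw.take (t0 + t) = Pw.take t0 ++ (Pw.drop t0).take t :=
      List.take_add (l := Pw) (i := t0) (j := t)
    have hv : sy k (Pw.take (t0 + t))
        = sy k (Pw.take t0) + sy k ((Pw.drop t0).take t) := by
      rw [hsplit]; simp
    have hnn := hP (t0 + t)
    rcases lt_or_eq_of_le (show (0:ℤ) ≤ sy k ((Pw.drop t0).take t) by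
      rw [hz] at hv; linarith) with hlt | heq0
    · exact hlt
    · exfalso
      have hQ' : Q (t0 + t) := by
        show sy k (Pw.take (t0 + t)) = 0
        rw [hv, hz, ← heq0]
        norm_num
      exact Nat.findGreatest_is_greatest (n := Pw.length) (by omega) (by omega) hQ'

/-! ### Verification: seeds map into both sets -/

section
variable {k a n : ℕ}

lemma block_bound (hk : 0 < k) {C1 : List Step} (hm : MinAtEnd k C1)
    (j s : ℕ) {b : ℤ} (hb : 0 ≤ b) (hb2 : 0 ≤ b + (k : ℤ) - 1 + sy k C1) :
    0 ≤ b + sy k ((Step.U :: (List.replicate j Step.H ++ Step.D :: C1)).take s) := by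
  cases s with
  | zero => simpa using hb
  | succ s =>
    rw [List.take_succ_cons, sy_cons, List.take_append,
      sy_append, List.take_replicate, sy_replicate_H, List.length_replicate]
    rcases hd : s - j with _ | u
    · simp only [List.take_zero, sy_nil, yv, add_zero, zero_add]
      have hku : (0 : ℤ) ≤ k := Int.ofNat_nonneg k
      linarith
    · rw [List.take_succ_cons, sy_cons]
      have := hm u
      simp only [yv]
      have hku : (0 : ℤ) ≤ k := Int.ofNat_nonneg k
      linarith

lemma toWord_mem (σ : ℕ × List Step × List Step × List Step)
    (hσ : σ ∈ Seeds k a n) : IsSuperPath k a n (toWord σ) ∧ FirstNonHIsU (toWord σ) := by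
  obtain ⟨j, A, C1, C2⟩ := σ
  obtain ⟨hA, hA0, hm, hs, hx, hy⟩ := hσ
  constructor
  · rw [superPath_iff]
    constructor
    · simp only [toWord, sx_append, sx_cons, sx_replicate_H, xv]
      simp only [Seeds] at hx ⊢
      linarith [hx]
    · simp only [toWord, sy_append, sy_cons, sy_replicate_H, yv]
      linarith [hy, hA0]
  · exact ⟨j, A ++ Step.D :: (C1 ++ C2), rfl⟩

lemma toPair_mem (hk : 0 < k) (σ : ℕ × List Step × List Step × List Step)
    (hσ : σ ∈ Seeds k a n) :
    (IsPath k a n (toPair σ).1 ∧ IsHumpAt (toPair σ).1 (toPair σ).2) := by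
  obtain ⟨j, A, C1, C2⟩ := σ
  obtain ⟨hA, hA0, hm, hs, hx, hy⟩ := hσ
  dsimp only at hA hA0 hm hs hx hy
  have hC2 : 0 ≤ sy k C2 := hs.sy_nonneg
  refine ⟨⟨?_, ?_⟩, ?_⟩
  · rw [superPath_iff]
    constructor
    · simp only [toPair, sx_append, sx_cons, sx_replicate_H, xv]
      linarith [hx]
    · simp only [toPair, sy_append, sy_cons, sy_replicate_H, yv]
      linarith [hy, hA0]
  · intro p hp
    rw [List.prefix_iff_eq_take] at hp
    rw [hp, pathDisp_eq]
    simp only [toPair]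
    generalize p.length = t
    rw [List.take_append, sy_append, List.take_append,
      sy_append, List.length_append]
    have h1 := hA t
    rcases le_or_gt t (A.length + C2.length) with hle | hgt
    · have hz : t - (A.length + C2.length) = 0 := by omega
      rw [hz, List.take_zero, sy_nil]
      have h2 := hs.take_nonneg (t - A.length)
      linarith
    · have e1 : C2.take (t - A.length) = C2 := List.take_of_length_le (by omega)
      rw [e1]
      have hbb := block_bound hk hm j (t - (A.length + C2.length)) (b := sy k C2)
        hC2 (by linarith)
      linarith
  · refine ⟨j, ?_⟩
    simp only [toPair]
    rw [← List.length_append (as := A) (bs := C2), List.drop_left]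
    exact ⟨C1, by simp⟩

/-! ### Decomposition: both sets are contained in the image of the seeds -/

lemma word_decomp (hk : 0 < k) {w : List Step} (hw : IsSuperPath k a n w)
    (hfu : FirstNonHIsU w) : ∃ σ ∈ Seeds k a n, w = toWord σ := by
  obtain ⟨l, r, rfl⟩ := hfu
  rw [superPath_iff] at hw
  obtain ⟨hx, hy⟩ := hw
  simp only [sx_append, sx_cons, sx_replicate_H, xv] at hx
  simp only [sy_append, sy_cons, sy_replicate_H, yv] at hy
  have hrneg : sy k r < 0 := by
    have : (0 : ℤ) < k := by exact_mod_cast hk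
    linarith
  obtain ⟨A, C, hrAC, hAnn, hA0⟩ := exists_firstNeg hrneg
  obtain ⟨C1, C2, hC12, hm, hs⟩ := exists_lastMin k C
  rw [hC12] at hrAC
  rw [hrAC] at hx hy
  simp only [sx_append, sx_cons, xv, sy_append, sy_cons, yv] at hx hy
  refine ⟨(l, A, C1, C2), ⟨hAnn, hA0, hm, hs, by linarith, by linarith⟩, ?_⟩
  rw [toWord]
  rw [hrAC]

lemma sy_take_block (k j : ℕ) (P S : List Step) (t : ℕ) :
    sy k ((P ++ (Step.U :: (List.replicate j Step.H ++ Step.D :: S))).take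
        (P.length + (j + t + 2)))
      = sy k P + (k : ℤ) - 1 + sy k (S.take t) := by
  rw [List.take_add, List.take_append_of_le_length le_rfl, List.take_length,
    List.drop_left, sy_append]
  rw [show j + t + 2 = (j + (t + 1)) + 1 by omega, List.take_succ_cons, sy_cons,
    List.take_append, List.length_replicate,
    List.take_of_length_le (by simp), sy_append, sy_replicate_H,
    show j + (t + 1) - j = t + 1 by omega, List.take_succ_cons, sy_cons]
  simp only [yv]
  ring

lemma pair_decomp (hk : 0 < k) {L : List Step} {i : ℕ} (hL : IsPath k a n L)
    (hh : IsHumpAt L i) : ∃ σ ∈ Seeds k a n, (L, i) = toPair σ := by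
  obtain ⟨j, hpre⟩ := hh
  obtain ⟨S, hS⟩ := hpre
  have hilt : i < L.length := by
    have h1 := List.IsPrefix.length_le ⟨S, hS⟩
    rw [List.length_drop] at h1
    simp only [List.length_cons, List.length_append, List.length_replicate,
      List.length_singleton] at h1
    omega
  have hLnn := isPath_take k a n L hL
  have hsp := (superPath_iff k a n L).mp hL.1
  set P := L.take i with hPdef
  have hdecomp : L = P ++ (Step.U :: (List.replicate j Step.H ++ Step.D :: S)) := by
    conv_lhs => rw [← List.take_append_drop i L]
    rw [← hS]
    simp [hPdef]
  have hPnn : PrefNN k P := by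
    intro t
    rw [hPdef, List.take_take]
    exact hLnn _
  obtain ⟨A, C2, hPAC, hAnn, hA0, hs⟩ := exists_lastZero hPnn
  have hPlen : P.length = i := by
    rw [hPdef, List.length_take]
    omega
  have hsyL : sy k L = 0 := hsp.2
  have h2 : sy k L = sy k P + ((k : ℤ) - 1 + sy k S) := by
    conv_lhs => rw [hdecomp]
    simp only [sy_append, sy_cons, sy_replicate_H, yv]
    ring
  have hmS : MinAtEnd k S := by
    intro t
    have h1 : 0 ≤ sy k (L.take (P.length + (j + t + 2))) := hLnn _
    rw [hdecomp, sy_take_block] at h1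
    linarith
  have hPsy : sy k P = sy k A + sy k C2 := by rw [hPAC]; simp
  have hPsx : sx a P = sx a A + sx a C2 := by rw [hPAC]; simp
  have hsx : sx a L = (n : ℤ) := hsp.1
  rw [hdecomp] at hsx
  simp only [sx_append, sx_cons, sx_replicate_H, xv] at hsx
  refine ⟨(j, A, S, C2), ⟨hAnn, hA0, hmS, hs, by linarith, by linarith⟩, ?_⟩
  have hlenAC : A.length + C2.length = i := by
    have := congrArg List.length hPAC
    rw [List.length_append] at this
    omega
  rw [toPair]
  refine Prod.ext ?_ ?_
  · simp only
    rw [hdecomp, hPAC, List.append_assoc]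
  · simp only
    omega

/-! ### Injectivity -/

lemma toWord_injOn : Set.InjOn toWord (Seeds k a n) := by
  rintro ⟨j, A, C1, C2⟩ hσ ⟨j', A', C1', C2'⟩ hσ' h
  obtain ⟨hA, hA0, hm, hs, -, -⟩ := hσ
  obtain ⟨hA', hA0', hm', hs', -, -⟩ := hσ'
  dsimp only at hA hA0 hm hs hA' hA0' hm' hs'
  simp only [toWord] at h
  obtain ⟨hj, h2⟩ := rep_block_inj (by decide : Step.U ≠ Step.H) j h
  obtain ⟨hAeq, hCeq⟩ := U1 h2 hA hA' hA0 hA0'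
  obtain ⟨h1eq, h2eq⟩ := U2 hCeq hm hm' hs hs'
  subst hj; subst hAeq; subst h1eq; subst h2eq
  rfl

lemma toPair_injOn : Set.InjOn toPair (Seeds k a n) := by
  rintro ⟨j, A, C1, C2⟩ hσ ⟨j', A', C1', C2'⟩ hσ' h
  obtain ⟨hA, hA0, hm, hs, -, -⟩ := hσ
  obtain ⟨hA', hA0', hm', hs', -, -⟩ := hσ'
  dsimp only at hA hA0 hm hs hA' hA0' hm' hs'
  simp only [toPair, Prod.mk.injEq] at h
  obtain ⟨h1, hlen⟩ := h
  obtain ⟨hP, hX⟩ := List.append_inj h1 (by simp only [List.length_append]; omega)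
  have hX' : List.replicate j Step.H ++ Step.D :: C1
      = List.replicate j' Step.H ++ Step.D :: C1' := by
    simpa using hX
  obtain ⟨hj, hC1⟩ := rep_block_inj (by decide : Step.D ≠ Step.H) j hX'
  obtain ⟨hAeq, hC2eq⟩ := U3 hP hA0 hA0' hs hs'
  subst hj; subst hAeq; subst hC1; subst hC2eq
  rfl

end
end Stmt1Aux

/-- The number of pairs `(L, p)` with `L` a `(k,a)`-path of order `n` and `p` a hump of `L`
equals the number of super `(k,a)`-paths of order `n` whose first non-horizontal step
is an up step. -/
theorem stmt1 (k a n : ℕ) (hk : 0 < k) (ha : 0 < a) :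
    {Lp : List Step × ℕ | IsPath k a n Lp.1 ∧ IsHumpAt Lp.1 Lp.2}.ncard =
      {w : List Step | IsSuperPath k a n w ∧ FirstNonHIsU w}.ncard := by
  have h1 : {Lp : List Step × ℕ | IsPath k a n Lp.1 ∧ IsHumpAt Lp.1 Lp.2}
      = Stmt1Aux.toPair '' Stmt1Aux.Seeds k a n := by
    ext ⟨L, i⟩
    simp only [Set.mem_setOf_eq, Set.mem_image]
    constructor
    · rintro ⟨hL, hh⟩
      obtain ⟨σ, hσ, heq⟩ := Stmt1Aux.pair_decomp hk hL hh
      exact ⟨σ, hσ, heq.symm⟩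
    · rintro ⟨σ, hσ, heq⟩
      have h := Stmt1Aux.toPair_mem hk σ hσ
      rw [heq] at h
      exact h
  have h2 : {w : List Step | IsSuperPath k a n w ∧ FirstNonHIsU w}
      = Stmt1Aux.toWord '' Stmt1Aux.Seeds k a n := by
    ext w
    simp only [Set.mem_setOf_eq, Set.mem_image]
    constructor
    · rintro ⟨hw, hfu⟩
      obtain ⟨σ, hσ, heq⟩ := Stmt1Aux.word_decomp hk hw hfu
      exact ⟨σ, hσ, heq.symm⟩
    · rintro ⟨σ, hσ, rfl⟩
      exact Stmt1Aux.toWord_mem σ hσ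
  rw [h1, h2, Set.ncard_image_of_injOn Stmt1Aux.toPair_injOn,
    Set.ncard_image_of_injOn Stmt1Aux.toWord_injOn]
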